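/- (Deterministic Lasso prediction rate.) Consider data (d_i, f_i), i=1,…,n, with d_i = f_i'β₀ + a_i + v_i where ‖β₀‖₀ ≤ s with support T, and the approximation error satisfies ((1/n)∑ a_i²)^{1/2} ≤ c_s. Let Q̂(β) = (1/n)∑(d_i − f_i'β)², let Υ⁰ be a diagonal matrix with positive entries, S = 2(Υ⁰)^{−1}(1/n)∑ f_i v_i the score vector, and let β̂ minimize Q̂(β) + (λ/n)‖Υβ‖₁ where ℓΥ⁰ ≤ Υ ≤ uΥ⁰ entrywise with u ≥ 1 ≥ ℓ > 1/c for some c > 1. If λ/n ≥ c‖S‖_∞, then ‖f_i'(β̂ − β₀)‖_{2,n} ≤ (u + 1/c)·λ√s/(n κ) + 2c_s, where κ is the weighted restricted eigenvalue κ_{c₀} with c₀ = (uc+1)/(ℓc−1), defined by κ_{c₀} = min over δ ≠ 0 with ‖(Υ⁰δ)_{T^c}‖₁ ≤ c₀‖(Υ⁰δ)_T‖₁ of √s ‖f_i'δ‖_{2,n}/‖(Υ⁰δ)_T‖₁ (assumed strictly positive). -/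

import Mathlib

/-- Empirical prediction norm `‖Fδ‖_{2,n} = ((1/n)∑ᵢ (fᵢ'δ)²)^{1/2}`. -/
noncomputable def predNorm (n p : ℕ) (F : Matrix (Fin n) (Fin p) ℝ)
    (δ : Fin p → ℝ) : ℝ :=
  Real.sqrt ((1 / (n : ℝ)) * ∑ i, (∑ j, F i j * δ j) ^ 2)

set_option maxHeartbeats 1000000 in
/-- Deterministic Lasso prediction rate (Lemma 6, first claim): under the model
`dᵢ = fᵢ'β₀ + aᵢ + vᵢ` with `‖β₀‖₀ ≤ s`, approximation error at most `c_s`,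
penalty `λ/n ≥ c‖S‖_∞`, and valid penalty loadings `ℓΥ⁰ ≤ Υ ≤ uΥ⁰`, the Lasso
solution satisfies `‖fᵢ'(β̂ − β₀)‖_{2,n} ≤ (u + 1/c)λ√s/(nκ) + 2c_s`. -/
theorem lasso_prediction_rate
    (n p s : ℕ) (hn : 0 < n)
    (f : Matrix (Fin n) (Fin p) ℝ)
    (β₀ : Fin p → ℝ) (T : Finset (Fin p))
    (hT : T = Finset.univ.filter (fun j => β₀ j ≠ 0)) (hTs : T.card ≤ s)
    (d a v : Fin n → ℝ)
    (hmodel : ∀ i, d i = (∑ j, f i j * β₀ j) + a i + v i)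
    (cs : ℝ) (hcs0 : 0 ≤ cs)
    (hcs : Real.sqrt ((1 / (n : ℝ)) * ∑ i, (a i) ^ 2) ≤ cs)
    (Υ0 Υ : Fin p → ℝ) (hΥ0 : ∀ j, 0 < Υ0 j)
    (c ℓ u lam : ℝ) (hc : 1 < c) (hu : 1 ≤ u) (hℓ1 : ℓ ≤ 1) (hℓc : 1 / c < ℓ)
    (hload : ∀ j, ℓ * Υ0 j ≤ Υ j ∧ Υ j ≤ u * Υ0 j)
    (S : Fin p → ℝ)
    (hS : ∀ j, S j = 2 * ((1 / (n : ℝ)) * ∑ i, f i j * v i) / Υ0 j)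
    (hlam : ∀ j, c * |S j| ≤ lam / n)
    (βhat : Fin p → ℝ)
    (hopt : ∀ β : Fin p → ℝ,
      (1 / (n : ℝ)) * (∑ i, (d i - ∑ j, f i j * βhat j) ^ 2)
          + (lam / n) * ∑ j, Υ j * |βhat j|
        ≤ (1 / (n : ℝ)) * (∑ i, (d i - ∑ j, f i j * β j) ^ 2)
          + (lam / n) * ∑ j, Υ j * |β j|)
    (c0 κ : ℝ) (hc0 : c0 = (u * c + 1) / (ℓ * c - 1))
    (hκ : κ = sInf {r : ℝ | ∃ δ : Fin p → ℝ, δ ≠ 0 ∧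
      (∑ j ∈ Tᶜ, |Υ0 j * δ j|) ≤ c0 * ∑ j ∈ T, |Υ0 j * δ j| ∧
      r = Real.sqrt s * predNorm n p f δ / ∑ j ∈ T, |Υ0 j * δ j|})
    (hκpos : 0 < κ) :
    predNorm n p f (βhat - β₀)
      ≤ (u + 1 / c) * (lam * Real.sqrt s) / (n * κ) + 2 * cs := by
  have hn' : (0:ℝ) < n := Nat.cast_pos.mpr hn
  have hnne : (n:ℝ) ≠ 0 := ne_of_gt hn'
  have hc' : (0:ℝ) < c := lt_trans one_pos hc
  have hℓ0 : 0 < ℓ := lt_trans (by positivity) hℓc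
  have hℓc1 : 0 < ℓ * c - 1 := by
    have := (div_lt_iff₀ hc').mp hℓc; linarith
  -- dispatch p = 0
  rcases Nat.eq_zero_or_pos p with hp0 | hp
  · exfalso
    have hempty : {r : ℝ | ∃ δ : Fin p → ℝ, δ ≠ 0 ∧
        (∑ j ∈ Tᶜ, |Υ0 j * δ j|) ≤ c0 * ∑ j ∈ T, |Υ0 j * δ j| ∧
        r = Real.sqrt s * predNorm n p f δ / ∑ j ∈ T, |Υ0 j * δ j|} = ∅ := by
      ext r
      simp only [Set.mem_setOf_eq, Set.mem_empty_iff_false, iff_false, not_exists]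
      intro δ h
      exact h.1 (funext fun j => absurd j.isLt (by omega))
    rw [hempty, Real.sInf_empty] at hκ
    exact absurd hκ (by linarith)
  -- lam ≥ 0
  have hlam0 : 0 ≤ lam := by
    have h1 : 0 ≤ lam / n :=
      le_trans (mul_nonneg hc'.le (abs_nonneg _)) (hlam ⟨0, hp⟩)
    have h2 := mul_nonneg h1 hn'.le
    rwa [div_mul_cancel₀ _ hnne] at h2
  -- setup
  set δ : Fin p → ℝ := βhat - β₀ with hδdef
  have hδap : ∀ j, δ j = βhat j - β₀ j := fun j => rfl
  set g : Fin n → ℝ := fun i => ∑ j, f i j * δ j with hgdef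
  set t : ℝ := predNorm n p f δ with htdef
  set A : ℝ := ∑ j ∈ T, |Υ0 j * δ j| with hAdef
  set B : ℝ := ∑ j ∈ Tᶜ, |Υ0 j * δ j| with hBdef
  have hA0 : 0 ≤ A := Finset.sum_nonneg fun j _ => abs_nonneg _
  have hB0 : 0 ≤ B := Finset.sum_nonneg fun j _ => abs_nonneg _
  have hg2 : 0 ≤ (1/(n:ℝ)) * ∑ i, g i ^ 2 := by positivity
  have ht0 : 0 ≤ t := Real.sqrt_nonneg _
  have ht2 : t ^ 2 = (1/(n:ℝ)) * ∑ i, g i ^ 2 := Real.sq_sqrt hg2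
  -- M ≥ 0
  set M : ℝ := (u + 1 / c) * (lam * Real.sqrt s) / (n * κ) with hMdef
  have hM0 : 0 ≤ M := by
    apply div_nonneg _ (by positivity)
    have : 0 < u + 1/c := by positivity
    positivity
  -- the basic inequality from optimality
  have hdiff : ∀ i, d i - ∑ j, f i j * βhat j = (a i + v i) - g i := by
    intro i
    have hgi : g i = (∑ j, f i j * βhat j) - ∑ j, f i j * β₀ j := by
      rw [hgdef]
      simp only [hδap, mul_sub]
      rw [Finset.sum_sub_distrib]
    rw [hmodel i]; rw [hgi]; ring
  have hbase : (1/(n:ℝ)) * ∑ i, g i ^ 2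
      ≤ 2 * ((1/(n:ℝ)) * ∑ i, (a i + v i) * g i)
        + (lam / n) * ((∑ j, Υ j * |β₀ j|) - ∑ j, Υ j * |βhat j|) := by
    have h := hopt β₀
    have e1 : ∑ i, (d i - ∑ j, f i j * βhat j) ^ 2
        = (∑ i, (a i + v i) ^ 2) - 2 * (∑ i, (a i + v i) * g i) + ∑ i, g i ^ 2 := by
      rw [Finset.sum_congr rfl fun i _ => by
        rw [hdiff i, show ((a i + v i) - g i)^2
          = (a i + v i)^2 - 2*((a i + v i) * g i) + g i ^2 from by ring]]
      rw [Finset.sum_add_distrib, Finset.sum_sub_distrib, Finset.mul_sum]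
    have e0 : ∑ i, (d i - ∑ j, f i j * β₀ j) ^ 2 = ∑ i, (a i + v i) ^ 2 := by
      apply Finset.sum_congr rfl
      intro i _
      rw [hmodel i]; ring
    rw [e1, e0] at h
    linarith [h]
  -- Cauchy-Schwarz for the approximation term
  have hag : (1/(n:ℝ)) * ∑ i, a i * g i ≤ cs * t := by
    have hCS := Finset.sum_mul_sq_le_sq_mul_sq Finset.univ a g
    have h1 : ((1/(n:ℝ)) * ∑ i, a i * g i) ^ 2
        ≤ ((1/(n:ℝ)) * ∑ i, a i ^ 2) * ((1/(n:ℝ)) * ∑ i, g i ^ 2) := by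
      have h2 : (0:ℝ) ≤ (1/(n:ℝ))^2 := by positivity
      calc ((1/(n:ℝ)) * ∑ i, a i * g i) ^ 2
          = (1/(n:ℝ))^2 * (∑ i, a i * g i)^2 := by ring
        _ ≤ (1/(n:ℝ))^2 * ((∑ i, a i ^ 2) * ∑ i, g i ^ 2) :=
            mul_le_mul_of_nonneg_left hCS h2
        _ = ((1/(n:ℝ)) * ∑ i, a i ^ 2) * ((1/(n:ℝ)) * ∑ i, g i ^ 2) := by ring
    calc (1/(n:ℝ)) * ∑ i, a i * g i
        ≤ |(1/(n:ℝ)) * ∑ i, a i * g i| := le_abs_self _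
      _ = Real.sqrt (((1/(n:ℝ)) * ∑ i, a i * g i)^2) := (Real.sqrt_sq_eq_abs _).symm
      _ ≤ Real.sqrt (((1/(n:ℝ)) * ∑ i, a i ^ 2) * ((1/(n:ℝ)) * ∑ i, g i ^ 2)) :=
          Real.sqrt_le_sqrt h1
      _ = Real.sqrt ((1/(n:ℝ)) * ∑ i, a i ^ 2) * Real.sqrt ((1/(n:ℝ)) * ∑ i, g i ^ 2) :=
          Real.sqrt_mul (by positivity) _
      _ ≤ cs * t := by
          apply mul_le_mul hcs le_rfl (Real.sqrt_nonneg _) hcs0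
  -- score term
  have hvg : 2 * ((1/(n:ℝ)) * ∑ i, v i * g i) ≤ (lam / n) * (1/c) * (A + B) := by
    have hswap : ∑ i, v i * g i = ∑ j, (∑ i, f i j * v i) * δ j := by
      simp only [hgdef, Finset.mul_sum]
      rw [Finset.sum_comm]
      apply Finset.sum_congr rfl
      intro j _
      rw [Finset.sum_mul]
      apply Finset.sum_congr rfl
      intro i _
      ring
    have hSid : ∀ j, 2 * ((1/(n:ℝ)) * ∑ i, f i j * v i) = S j * Υ0 j := by
      intro j
      rw [hS j, div_mul_cancel₀ _ (ne_of_gt (hΥ0 j))]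
    have heq : 2 * ((1/(n:ℝ)) * ∑ i, v i * g i) = ∑ j, S j * (Υ0 j * δ j) := by
      rw [hswap, Finset.mul_sum, Finset.mul_sum]
      apply Finset.sum_congr rfl
      intro j _
      have := hSid j
      calc 2 * (1/(n:ℝ) * ((∑ i, f i j * v i) * δ j))
          = (2 * ((1/(n:ℝ)) * ∑ i, f i j * v i)) * δ j := by ring
        _ = S j * Υ0 j * δ j := by rw [this]
        _ = S j * (Υ0 j * δ j) := by ring
    rw [heq]
    have hABsum : A + B = ∑ j, |Υ0 j * δ j| := by
      rw [hAdef, hBdef]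
      exact Finset.sum_add_sum_compl T _
    rw [hABsum, Finset.mul_sum]
    apply Finset.sum_le_sum
    intro j _
    have h1 : S j * (Υ0 j * δ j) ≤ |S j| * |Υ0 j * δ j| := by
      calc S j * (Υ0 j * δ j) ≤ |S j * (Υ0 j * δ j)| := le_abs_self _
        _ = |S j| * |Υ0 j * δ j| := abs_mul _ _
    have h2 : |S j| ≤ (lam / n) * (1/c) := by
      have := hlam j
      rw [mul_one_div, le_div_iff₀ hc']
      linarith [this]
    calc S j * (Υ0 j * δ j) ≤ |S j| * |Υ0 j * δ j| := h1
      _ ≤ (lam / n) * (1/c) * |Υ0 j * δ j| :=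
          mul_le_mul_of_nonneg_right h2 (abs_nonneg _)
  -- penalty term
  have habs : ∀ j, |Υ0 j * δ j| = Υ0 j * |δ j| := by
    intro j
    rw [abs_mul, abs_of_pos (hΥ0 j)]
  have hΥpos : ∀ j, 0 ≤ Υ j := fun j =>
    le_trans (mul_nonneg hℓ0.le (hΥ0 j).le) (hload j).1
  have hpen : (∑ j, Υ j * |β₀ j|) - (∑ j, Υ j * |βhat j|) ≤ u * A - ℓ * B := by
    have hsplit : ∀ w : Fin p → ℝ, (∑ j, w j) = (∑ j ∈ T, w j) + ∑ j ∈ Tᶜ, w j :=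
      fun w => (Finset.sum_add_sum_compl T w).symm
    rw [hsplit (fun j => Υ j * |β₀ j|), hsplit (fun j => Υ j * |βhat j|)]
    have hTpart : (∑ j ∈ T, Υ j * |β₀ j|) - (∑ j ∈ T, Υ j * |βhat j|) ≤ u * A := by
      rw [hAdef, Finset.mul_sum, ← Finset.sum_sub_distrib]
      apply Finset.sum_le_sum
      intro j _
      have h1 : |β₀ j| - |βhat j| ≤ |δ j| := by
        have := abs_sub_abs_le_abs_sub (β₀ j) (βhat j)
        rw [show |β₀ j - βhat j| = |δ j| from by rw [hδap]; rw [abs_sub_comm]] at this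
        exact this
      calc Υ j * |β₀ j| - Υ j * |βhat j| = Υ j * (|β₀ j| - |βhat j|) := by ring
        _ ≤ Υ j * |δ j| := mul_le_mul_of_nonneg_left h1 (hΥpos j)
        _ ≤ u * Υ0 j * |δ j| := mul_le_mul_of_nonneg_right (hload j).2 (abs_nonneg _)
        _ = u * |Υ0 j * δ j| := by rw [habs j]; ring
    have hTcpart : (∑ j ∈ Tᶜ, Υ j * |β₀ j|) - (∑ j ∈ Tᶜ, Υ j * |βhat j|) ≤ -(ℓ * B) := by
      rw [hBdef, Finset.mul_sum, ← Finset.sum_neg_distrib, ← Finset.sum_sub_distrib]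
      apply Finset.sum_le_sum
      intro j hj
      have hβ0j : β₀ j = 0 := by
        rw [Finset.mem_compl, hT, Finset.mem_filter] at hj
        push_neg at hj
        exact hj (Finset.mem_univ j)
      have hδj : |δ j| = |βhat j| := by rw [hδap, hβ0j, sub_zero]
      rw [hβ0j]
      simp only [abs_zero, mul_zero, zero_sub]
      rw [habs j, ← hδj]
      have : ℓ * Υ0 j * |δ j| ≤ Υ j * |δ j| :=
        mul_le_mul_of_nonneg_right (hload j).1 (abs_nonneg _)
      linarith [this]
    linarith [hTpart, hTcpart]
  -- key inequality
  have hK : t ^ 2 ≤ 2 * cs * t + (lam / n) * ((u + 1/c) * A - (ℓ - 1/c) * B) := by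
    rw [ht2]
    have hsum : ∑ i, (a i + v i) * g i = (∑ i, a i * g i) + ∑ i, v i * g i := by
      rw [← Finset.sum_add_distrib]
      apply Finset.sum_congr rfl
      intro i _; ring
    have h1 := hbase
    rw [hsum] at h1
    have hpen' : (lam / n) * ((∑ j, Υ j * |β₀ j|) - ∑ j, Υ j * |βhat j|)
        ≤ (lam / n) * (u * A - ℓ * B) :=
      mul_le_mul_of_nonneg_left hpen (by positivity)
    linarith [hag, hvg, h1, hpen']
  -- case analysis
  rcases eq_or_ne δ 0 with hδ0 | hδ0
  · have htz : t = 0 := by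
      rw [htdef, hδ0]; simp [predNorm]
    linarith [htz, hM0, hcs0]
  · by_cases hcase : B ≤ c0 * A
    · -- restricted eigenvalue case
      have hApos : 0 < A := by
        rcases lt_or_eq_of_le hA0 with h | h
        · exact h
        · exfalso
          have hc0nn : 0 ≤ c0 := by
            rw [hc0]
            apply div_nonneg _ hℓc1.le
            nlinarith
          have hBz : B = 0 := le_antisymm (by nlinarith [hcase]) hB0
          apply hδ0
          funext j
          have hAz := (Finset.sum_eq_zero_iff_of_nonneg
            (fun j _ => abs_nonneg (Υ0 j * δ j))).mp h.symm
          have hBz' := (Finset.sum_eq_zero_iff_of_nonneg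
            (fun j _ => abs_nonneg (Υ0 j * δ j))).mp hBz
          have hj : |Υ0 j * δ j| = 0 := by
            by_cases hjT : j ∈ T
            · exact hAz j hjT
            · exact hBz' j (Finset.mem_compl.mpr hjT)
          have hj2 := abs_eq_zero.mp hj
          have : δ j = 0 := by
            rcases mul_eq_zero.mp hj2 with h' | h'
            · exact absurd h' (ne_of_gt (hΥ0 j))
            · exact h'
          simpa using this
      have hmem : Real.sqrt s * t / A ∈ {r : ℝ | ∃ δ' : Fin p → ℝ, δ' ≠ 0 ∧
          (∑ j ∈ Tᶜ, |Υ0 j * δ' j|) ≤ c0 * ∑ j ∈ T, |Υ0 j * δ' j| ∧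
          r = Real.sqrt s * predNorm n p f δ' / ∑ j ∈ T, |Υ0 j * δ' j|} :=
        ⟨δ, hδ0, hcase, rfl⟩
      have hbdd : BddBelow {r : ℝ | ∃ δ' : Fin p → ℝ, δ' ≠ 0 ∧
          (∑ j ∈ Tᶜ, |Υ0 j * δ' j|) ≤ c0 * ∑ j ∈ T, |Υ0 j * δ' j| ∧
          r = Real.sqrt s * predNorm n p f δ' / ∑ j ∈ T, |Υ0 j * δ' j|} := by
        refine ⟨0, fun r hr => ?_⟩
        obtain ⟨δ', -, -, hre⟩ := hr
        rw [hre]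
        exact div_nonneg (mul_nonneg (Real.sqrt_nonneg _) (Real.sqrt_nonneg _))
          (Finset.sum_nonneg fun j _ => abs_nonneg _)
      have hκle : κ ≤ Real.sqrt s * t / A := by
        rw [hκ]; exact csInf_le hbdd hmem
      have hAle : A ≤ Real.sqrt s * t / κ := by
        rw [le_div_iff₀ hκpos, mul_comm]
        exact (le_div_iff₀ hApos).mp hκle
      have hK3 : t ^ 2 ≤ 2 * cs * t
          + (lam / n) * ((u + 1/c) * (Real.sqrt s * t / κ)) := by
        have hℓ1c : (0:ℝ) ≤ ℓ - 1/c := by linarith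
        have h2 : (u + 1/c) * A ≤ (u + 1/c) * (Real.sqrt s * t / κ) :=
          mul_le_mul_of_nonneg_left hAle (by positivity)
        have h3 : (lam/n) * ((u + 1/c) * A - (ℓ - 1/c) * B)
            ≤ (lam/n) * ((u + 1/c) * (Real.sqrt s * t / κ)) := by
          apply mul_le_mul_of_nonneg_left _ (div_nonneg hlam0 hn'.le)
          nlinarith [mul_nonneg hℓ1c hB0]
        linarith [hK, h3]
      have hMt : (lam / n) * ((u + 1/c) * (Real.sqrt s * t / κ)) = M * t := by
        rw [hMdef]
        field_simp
      rw [hMt] at hK3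
      show t ≤ M + 2 * cs
      rcases lt_or_eq_of_le ht0 with h | h
      · have hmul : t * t ≤ (M + 2 * cs) * t := by nlinarith [hK3]
        exact le_of_mul_le_mul_right hmul h
      · linarith [hM0, hcs0]
    · -- complement case: penalty dominates
      push_neg at hcase
      have hc0eq : (ℓ - 1/c) * c0 = u + 1/c := by
        rw [hc0]
        field_simp
      have hℓ1c : (0:ℝ) < ℓ - 1/c := by linarith
      have h5 : (ℓ - 1/c) * (c0 * A) = (u + 1/c) * A := by
        rw [← mul_assoc, hc0eq]
      have h6 := mul_lt_mul_of_pos_left hcase hℓ1c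
      have hbr : (u + 1/c) * A - (ℓ - 1/c) * B ≤ 0 := by linarith [h5, h6]
      have h7 : (lam/n) * ((u + 1/c) * A - (ℓ - 1/c) * B) ≤ 0 :=
        mul_nonpos_of_nonneg_of_nonpos (div_nonneg hlam0 hn'.le) hbr
      have hK2 : t ^ 2 ≤ 2 * cs * t := by linarith [hK, h7]
      show t ≤ M + 2 * cs
      rcases lt_or_eq_of_le ht0 with h | h
      · have hmul : t * t ≤ (2 * cs) * t := by nlinarith [hK2]
        have := le_of_mul_le_mul_right hmul h
        linarith [hM0]
      · linarith [hM0, hcs0]
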